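/- Let Z, W, Y be real random variables with Y independent of both Z and W, P(W>u)>0 and P(Y>u)>0 for all u>0, and suppose for some a>0, lim_{u→∞} P(Y>u+a)/P(Y>u) = 0. If lim_{u→∞} P(Z>u)/P(W>u) = 0, then lim_{u→∞} P(Y+Z>u)/P(Y+W>u) = 0. -/

import Mathlib

open MeasureTheory ProbabilityTheory Filter Set

section Aux

variable {Ω : Type*} [MeasurableSpace Ω] (μ : Measure Ω) [IsProbabilityMeasure μ]

lemma sum_tail_eq (Y X : Ω → ℝ) (hY : Measurable Y) (hX : Measurable X)
    (h : IndepFun Y X μ) (u : ℝ) :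
    μ {ω | Y ω + X ω > u}
      = ∫⁻ y, (μ.map X) (Ioi (u - y)) ∂(μ.map Y) := by
  have hmap : μ.map (fun ω => (Y ω, X ω)) = (μ.map Y).prod (μ.map X) :=
    (indepFun_iff_map_prod_eq_prod_map_map hY.aemeasurable hX.aemeasurable).mp h
  have hs : MeasurableSet {p : ℝ × ℝ | u < p.1 + p.2} :=
    measurableSet_lt measurable_const (measurable_fst.add measurable_snd)
  have hpre : ∀ y : ℝ, Prod.mk y ⁻¹' {p : ℝ × ℝ | u < p.1 + p.2} = Ioi (u - y) := by
    intro y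
    ext x
    simp only [mem_preimage, mem_setOf_eq, mem_Ioi]
    constructor <;> intro <;> linarith
  calc μ {ω | Y ω + X ω > u}
      = μ ((fun ω => (Y ω, X ω)) ⁻¹' {p : ℝ × ℝ | u < p.1 + p.2}) := rfl
    _ = (μ.map (fun ω => (Y ω, X ω))) {p : ℝ × ℝ | u < p.1 + p.2} :=
        (Measure.map_apply (hY.prodMk hX) hs).symm
    _ = ((μ.map Y).prod (μ.map X)) {p : ℝ × ℝ | u < p.1 + p.2} := by rw [hmap]
    _ = ∫⁻ y, (μ.map X) (Prod.mk y ⁻¹' {p : ℝ × ℝ | u < p.1 + p.2}) ∂(μ.map Y) :=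
        Measure.prod_apply hs
    _ = _ := by simp_rw [hpre]

lemma conv_bound (Y Z W : Ω → ℝ) (hY : Measurable Y) (hZ : Measurable Z)
    (hW : Measurable W) (hYZ : IndepFun Y Z μ) (hYW : IndepFun Y W μ)
    (ε : ENNReal) (M u : ℝ)
    (hM : ∀ t : ℝ, M ≤ t → μ.map Z (Ioi t) ≤ ε * μ.map W (Ioi t)) :
    μ {ω | Y ω + Z ω > u}
      ≤ ε * μ {ω | Y ω + W ω > u} + μ {ω | Y ω > u - M} := by
  have hZprob : IsProbabilityMeasure (μ.map Z) := Measure.isProbabilityMeasure_map hZ.aemeasurable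
  rw [sum_tail_eq μ Y Z hY hZ hYZ u, sum_tail_eq μ Y W hY hW hYW u]
  have hsplit :
      ∫⁻ y, (μ.map Z) (Ioi (u - y)) ∂(μ.map Y)
        = (∫⁻ y in Iic (u - M), (μ.map Z) (Ioi (u - y)) ∂(μ.map Y))
          + ∫⁻ y in Ioi (u - M), (μ.map Z) (Ioi (u - y)) ∂(μ.map Y) := by
    rw [← lintegral_add_compl (fun y => (μ.map Z) (Ioi (u - y))) measurableSet_Iic]
    congr 1
    congr 1
    ext y
    simp [not_le]
  rw [hsplit]
  have h1 : (∫⁻ y in Iic (u - M), (μ.map Z) (Ioi (u - y)) ∂(μ.map Y))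
      ≤ ε * ∫⁻ y, (μ.map W) (Ioi (u - y)) ∂(μ.map Y) := by
    have hmono : (∫⁻ y in Iic (u - M), (μ.map Z) (Ioi (u - y)) ∂(μ.map Y))
        ≤ ∫⁻ y in Iic (u - M), ε * (μ.map W) (Ioi (u - y)) ∂(μ.map Y) := by
      refine setLIntegral_mono' measurableSet_Iic fun y hy => ?_
      exact hM (u - y) (by simp only [mem_Iic] at hy; linarith)
    refine hmono.trans ?_
    have hWmono : Measurable fun y : ℝ => (μ.map W) (Ioi (u - y)) := by
      have : Monotone fun y : ℝ => (μ.map W) (Ioi (u - y)) := fun y1 y2 h =>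
        measure_mono (Ioi_subset_Ioi (by linarith))
      exact this.measurable
    rw [lintegral_const_mul ε hWmono]
    exact mul_le_mul_right (setLIntegral_le_lintegral _ _) ε
  have h2 : (∫⁻ y in Ioi (u - M), (μ.map Z) (Ioi (u - y)) ∂(μ.map Y))
      ≤ μ {ω | Y ω > u - M} := by
    have : (∫⁻ y in Ioi (u - M), (μ.map Z) (Ioi (u - y)) ∂(μ.map Y))
        ≤ ∫⁻ _ in Ioi (u - M), 1 ∂(μ.map Y) := by
      refine setLIntegral_mono' measurableSet_Ioi fun y _ => prob_le_one
    refine this.trans ?_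
    rw [setLIntegral_one]
    rw [Measure.map_apply hY measurableSet_Ioi]
    rfl
  exact add_le_add h1 h2

end Aux

theorem comparison_lemma_zero
    {Ω : Type*} [MeasurableSpace Ω] (μ : Measure Ω) [IsProbabilityMeasure μ]
    (Z W Y : Ω → ℝ) (hZ : Measurable Z) (hW : Measurable W) (hY : Measurable Y)
    (hYZ : IndepFun Y Z μ) (hYW : IndepFun Y W μ)
    (hWpos : ∀ u : ℝ, 0 < u → 0 < (μ {ω | W ω > u}).toReal)
    (hYpos : ∀ u : ℝ, 0 < u → 0 < (μ {ω | Y ω > u}).toReal)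
    (a : ℝ) (ha : 0 < a)
    (hYtail : Tendsto (fun u : ℝ =>
        (μ {ω | Y ω > u + a}).toReal / (μ {ω | Y ω > u}).toReal) atTop (nhds 0))
    (hZW : Tendsto (fun u : ℝ =>
        (μ {ω | Z ω > u}).toReal / (μ {ω | W ω > u}).toReal) atTop (nhds 0)) :
    Tendsto (fun u : ℝ =>
        (μ {ω | Y ω + Z ω > u}).toReal / (μ {ω | Y ω + W ω > u}).toReal)
      atTop (nhds 0) := by
  rw [NormedAddCommGroup.tendsto_nhds_zero]
  intro ε₀ hε₀
  -- step 1: get M from hZW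
  have hε4 : (0 : ℝ) < ε₀ / 4 := by linarith
  have hZWev : ∀ᶠ t in atTop,
      μ {ω | Z ω > t} ≤ ENNReal.ofReal (ε₀ / 4) * μ {ω | W ω > t} := by
    filter_upwards [hZW.eventually (gt_mem_nhds hε4), eventually_gt_atTop 0] with t ht ht0
    have hWt : 0 < (μ {ω | W ω > t}).toReal := hWpos t ht0
    have hle : (μ {ω | Z ω > t}).toReal ≤ ε₀ / 4 * (μ {ω | W ω > t}).toReal := by
      rw [div_lt_iff₀ hWt] at ht
      exact ht.le
    calc μ {ω | Z ω > t} = ENNReal.ofReal (μ {ω | Z ω > t}).toReal := by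
          rw [ENNReal.ofReal_toReal (measure_ne_top _ _)]
      _ ≤ ENNReal.ofReal (ε₀ / 4 * (μ {ω | W ω > t}).toReal) :=
          ENNReal.ofReal_le_ofReal hle
      _ = ENNReal.ofReal (ε₀ / 4) * ENNReal.ofReal (μ {ω | W ω > t}).toReal := by
          rw [ENNReal.ofReal_mul hε4.le]
      _ = ENNReal.ofReal (ε₀ / 4) * μ {ω | W ω > t} := by
          rw [ENNReal.ofReal_toReal (measure_ne_top _ _)]
  obtain ⟨M₀, hM₀⟩ := eventually_atTop.mp hZWev
  set M : ℝ := max M₀ 1 with hMdef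
  have hM1 : (1 : ℝ) ≤ M := le_max_right _ _
  have hM : ∀ t : ℝ, M ≤ t →
      μ {ω | Z ω > t} ≤ ENNReal.ofReal (ε₀ / 4) * μ {ω | W ω > t} :=
    fun t ht => hM₀ t ((le_max_left _ _).trans ht)
  -- step 2: q
  set q : ℝ := (μ {ω | W ω > M + a}).toReal with hqdef
  have hq : 0 < q := hWpos (M + a) (by linarith)
  -- step 3: get T from hYtail with ε' = ε₀/4 * q
  have hε' : (0 : ℝ) < ε₀ / 4 * q := by positivity
  have hYev : ∀ᶠ t in atTop,
      μ {ω | Y ω > t + a} ≤ ENNReal.ofReal (ε₀ / 4 * q) * μ {ω | Y ω > t} := by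
    filter_upwards [hYtail.eventually (gt_mem_nhds hε'), eventually_gt_atTop 0] with t ht ht0
    have hYt : 0 < (μ {ω | Y ω > t}).toReal := hYpos t ht0
    have hle : (μ {ω | Y ω > t + a}).toReal ≤ ε₀ / 4 * q * (μ {ω | Y ω > t}).toReal := by
      rw [div_lt_iff₀ hYt] at ht
      exact ht.le
    calc μ {ω | Y ω > t + a} = ENNReal.ofReal (μ {ω | Y ω > t + a}).toReal := by
          rw [ENNReal.ofReal_toReal (measure_ne_top _ _)]
      _ ≤ ENNReal.ofReal (ε₀ / 4 * q * (μ {ω | Y ω > t}).toReal) :=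
          ENNReal.ofReal_le_ofReal hle
      _ = ENNReal.ofReal (ε₀ / 4 * q) * ENNReal.ofReal (μ {ω | Y ω > t}).toReal := by
          rw [ENNReal.ofReal_mul hε'.le]
      _ = ENNReal.ofReal (ε₀ / 4 * q) * μ {ω | Y ω > t} := by
          rw [ENNReal.ofReal_toReal (measure_ne_top _ _)]
  obtain ⟨T, hT⟩ := eventually_atTop.mp hYev
  -- final bound, for u large
  filter_upwards [eventually_ge_atTop (max (T + M + a) (M + a + 1))] with u hu
  have hu1 : T + M + a ≤ u := (le_max_left _ _).trans hu
  have hu2 : M + a + 1 ≤ u := (le_max_right _ _).trans hu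
  set t : ℝ := u - M - a with htdef
  have ht0 : (1 : ℝ) ≤ t := by simp only [htdef]; linarith
  have htT : T ≤ t := by simp only [htdef]; linarith
  set N := μ {ω | Y ω + Z ω > u} with hNdef
  set D := μ {ω | Y ω + W ω > u} with hDdef
  -- intersection lower bound on D
  have hDlow : μ {ω | Y ω > t} * μ {ω | W ω > M + a} ≤ D := by
    have hsub : (Y ⁻¹' Ioi t) ∩ (W ⁻¹' Ioi (M + a)) ⊆ {ω | Y ω + W ω > u} := by
      intro ω hω
      simp only [mem_inter_iff, mem_preimage, mem_Ioi] at hω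
      simp only [mem_setOf_eq, gt_iff_lt, htdef] at *
      linarith [hω.1, hω.2]
    calc μ {ω | Y ω > t} * μ {ω | W ω > M + a}
        = μ (Y ⁻¹' Ioi t) * μ (W ⁻¹' Ioi (M + a)) := rfl
      _ = μ ((Y ⁻¹' Ioi t) ∩ (W ⁻¹' Ioi (M + a))) :=
          (hYW.measure_inter_preimage_eq_mul _ _ measurableSet_Ioi measurableSet_Ioi).symm
      _ ≤ D := measure_mono hsub
  -- convolution bound
  have hMmap : ∀ s : ℝ, M ≤ s → μ.map Z (Ioi s) ≤ ENNReal.ofReal (ε₀ / 4) * μ.map W (Ioi s) := by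
    intro s hs
    rw [Measure.map_apply hZ measurableSet_Ioi, Measure.map_apply hW measurableSet_Ioi]
    exact hM s hs
  have hconv : N ≤ ENNReal.ofReal (ε₀ / 4) * D + μ {ω | Y ω > u - M} :=
    conv_bound μ Y Z W hY hZ hW hYZ hYW _ M u hMmap
  have hYshift : μ {ω | Y ω > u - M} ≤ ENNReal.ofReal (ε₀ / 4 * q) * μ {ω | Y ω > t} := by
    have : u - M = t + a := by simp [htdef]
    rw [this]
    exact hT t htT
  have hbound : N ≤ ENNReal.ofReal (ε₀ / 4) * D
      + ENNReal.ofReal (ε₀ / 4 * q) * μ {ω | Y ω > t} :=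
    hconv.trans (add_le_add_right hYshift _)
  -- pass to reals
  have hDfin : D ≠ ⊤ := measure_ne_top _ _
  have hNfin : N ≠ ⊤ := measure_ne_top _ _
  have hYtfin : μ {ω | Y ω > t} ≠ ⊤ := measure_ne_top _ _
  have hYtpos : 0 < (μ {ω | Y ω > t}).toReal := hYpos t (by linarith)
  have hDpos : 0 < D.toReal := by
    have h1 : (μ {ω | Y ω > t}).toReal * q ≤ D.toReal := by
      rw [← ENNReal.toReal_mul]
      exact ENNReal.toReal_mono hDfin hDlow
    have : 0 < (μ {ω | Y ω > t}).toReal * q := by positivity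
    linarith
  have hNr : N.toReal ≤ ε₀ / 4 * D.toReal + ε₀ / 4 * q * (μ {ω | Y ω > t}).toReal := by
    have hrhs : (ENNReal.ofReal (ε₀ / 4) * D
        + ENNReal.ofReal (ε₀ / 4 * q) * μ {ω | Y ω > t}).toReal
        = ε₀ / 4 * D.toReal + ε₀ / 4 * q * (μ {ω | Y ω > t}).toReal := by
      rw [ENNReal.toReal_add (ENNReal.mul_ne_top ENNReal.ofReal_ne_top hDfin)
        (ENNReal.mul_ne_top ENNReal.ofReal_ne_top hYtfin),
        ENNReal.toReal_mul, ENNReal.toReal_mul,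
        ENNReal.toReal_ofReal hε4.le, ENNReal.toReal_ofReal hε'.le]
    calc N.toReal ≤ (ENNReal.ofReal (ε₀ / 4) * D
        + ENNReal.ofReal (ε₀ / 4 * q) * μ {ω | Y ω > t}).toReal :=
        ENNReal.toReal_mono (by
          exact ENNReal.add_ne_top.mpr
            ⟨ENNReal.mul_ne_top ENNReal.ofReal_ne_top hDfin,
             ENNReal.mul_ne_top ENNReal.ofReal_ne_top hYtfin⟩) hbound
      _ = _ := hrhs
  have hYtD : (μ {ω | Y ω > t}).toReal * q ≤ D.toReal := by
    rw [← ENNReal.toReal_mul]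
    exact ENNReal.toReal_mono hDfin hDlow
  have hfinal : N.toReal ≤ ε₀ / 2 * D.toReal := by
    have : ε₀ / 4 * q * (μ {ω | Y ω > t}).toReal ≤ ε₀ / 4 * D.toReal := by
      have := hYtD
      nlinarith
    linarith
  have hratio : N.toReal / D.toReal ≤ ε₀ / 2 := by
    rw [div_le_iff₀ hDpos]
    linarith [hfinal]
  have hnn : 0 ≤ N.toReal / D.toReal := by positivity
  rw [Real.norm_eq_abs, abs_of_nonneg hnn]
  linarith
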